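/- Let n ≥ 2, s ≥ 2, and let R(P_n) = u_1,…,u_r be the rooted list of minimal generators of J(P_n). If u_{i_1}⋯u_{i_s} ∈ G(J(P_n)^s), then u_p u_q ∈ G(J(P_n)^2) for all p, q ∈ {i_1,…,i_s}. -/

import Mathlib

open MvPolynomial

noncomputable section

/-- The cover ideal of the path graph `P_n` on vertices `x_1, …, x_n`:
the intersection of the ideals `(x_i, x_{i+1})` over the edges of the path. -/
def pathCoverIdeal (k : Type*) [Field k] (n : ℕ) : Ideal (MvPolynomial ℕ k) :=
  ⨅ i ∈ Finset.Icc 1 (n - 1), Ideal.span {(X i : MvPolynomial ℕ k), X (i + 1)}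

/-- A monomial with coefficient `1`. -/
def IsMonomial {k : Type*} [Field k] (m : MvPolynomial ℕ k) : Prop :=
  ∃ a : ℕ →₀ ℕ, m = monomial a 1

/-- The minimal monomial generating set `G(I)` of a monomial ideal `I`:
monomials of `I` that are not strictly divisible by another monomial of `I`. -/
def minGens {k : Type*} [Field k] (I : Ideal (MvPolynomial ℕ k)) :
    Set (MvPolynomial ℕ k) :=
  {m | IsMonomial m ∧ m ∈ I ∧ ∀ m', IsMonomial m' → m' ∈ I → m' ∣ m → m' = m}

/-- The rooted list `R(P_n)` of the path `P_n`. -/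
def rootedList (k : Type*) [Field k] : ℕ → List (MvPolynomial ℕ k)
  | 0 => [1]
  | 1 => [1]
  | 2 => [X 1, X 2]
  | 3 => [X 2, X 1 * X 3]
  | (n + 4) =>
      ((rootedList k (n + 2)).map fun u => X (n + 3) * u) ++
      ((rootedList k (n + 1)).map fun u => X (n + 4) * X (n + 2) * u)

/-- `F(I^s)`: the set of `s`-fold products of minimal generators of `I`. -/
def sFold {k : Type*} [Field k] (I : Ideal (MvPolynomial ℕ k)) (s : ℕ) :
    Set (MvPolynomial ℕ k) :=
  {m | ∃ L : List (MvPolynomial ℕ k), L.length = s ∧ (∀ u ∈ L, u ∈ minGens I) ∧ m = L.prod}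

/-- `a >_lex b`: the first entry where `a` and `b` differ is bigger in `a`. -/
def lexGt (a b : ℕ → ℕ) : Prop :=
  ∃ t, (∀ j, j < t → a j = b j) ∧ b t < a t

/-- `a` is an exponent-vector expression of `M` as an `s`-fold product of the terms of
the list `L`. -/
def IsExprOn {k : Type*} [Field k] (L : List (MvPolynomial ℕ k)) (s : ℕ) (a : ℕ → ℕ)
    (M : MvPolynomial ℕ k) : Prop :=
  (∀ i, L.length ≤ i → a i = 0) ∧ (∑ i ∈ Finset.range L.length, a i) = s ∧
    M = ∏ i ∈ Finset.range L.length, (L.getD i 1) ^ (a i)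

/-- `a` is the (lexicographically) maximal expression of `M` as an `s`-fold product of
the terms of the list `L`. -/
def IsMaxExpr {k : Type*} [Field k] (L : List (MvPolynomial ℕ k)) (s : ℕ) (a : ℕ → ℕ)
    (M : MvPolynomial ℕ k) : Prop :=
  IsExprOn L s a M ∧ ∀ b, IsExprOn L s b M → b ≠ a → lexGt a b

/-- The rooted order `M >_R N` on `s`-fold products, relative to the list `L` of
minimal generators: maximal expressions are compared lexicographically. -/
def rootedGt {k : Type*} [Field k] (L : List (MvPolynomial ℕ k)) (s : ℕ)
    (M N : MvPolynomial ℕ k) : Prop :=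
  ∃ a b, IsMaxExpr L s a M ∧ IsMaxExpr L s b N ∧ lexGt a b

/-- An ideal is generated by a subset of the variables. -/
def genByVars {k : Type*} [Field k] (I : Ideal (MvPolynomial ℕ k)) : Prop :=
  ∃ T : Set ℕ, I = Ideal.span ((fun i => (X i : MvPolynomial ℕ k)) '' T)

namespace PathAux


/-- Exponent-vector version of the rooted list. -/
def rl : ℕ → List (ℕ →₀ ℕ)
  | 0 => [0]
  | 1 => [0]
  | 2 => [Finsupp.single 1 1, Finsupp.single 2 1]
  | 3 => [Finsupp.single 2 1, Finsupp.single 1 1 + Finsupp.single 3 1]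
  | (n + 4) =>
      ((rl (n + 2)).map fun e => Finsupp.single (n + 3) 1 + e) ++
      ((rl (n + 1)).map fun e => Finsupp.single (n + 4) 1 + Finsupp.single (n + 2) 1 + e)

lemma X_eq_monomial {k : Type*} [Field k] (i : ℕ) :
    (X i : MvPolynomial ℕ k) = monomial (Finsupp.single i 1) 1 := rfl

/-- `rootedList` is the monomial image of `rl`. -/
lemma rootedList_eq (k : Type*) [Field k] :
    ∀ n, rootedList k n = (rl n).map (fun e => monomial e (1 : k))
  | 0 => by
      simp [rootedList, rl, monomial_zero', C_1]
  | 1 => by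
      simp [rootedList, rl, monomial_zero', C_1]
  | 2 => by
      simp [rootedList, rl, X_eq_monomial]
  | 3 => by
      simp [rootedList, rl, X_eq_monomial, monomial_mul]
  | (n + 4) => by
      rw [rootedList, rl, rootedList_eq k (n + 2), rootedList_eq k (n + 1)]
      simp [List.map_map, Function.comp_def, X_eq_monomial, monomial_mul]


lemma single_apply_le {M : Type*} [AddCommMonoid M] [PartialOrder M] (i x : ℕ) {c : M} :
    (Finsupp.single i c) x ≤ c ∨ (Finsupp.single i c) x = 0 := by
  rcases eq_or_ne i x with rfl | h
  · left; simp
  · right; exact Finsupp.single_eq_of_ne' h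

/-- strengthened: value at a point of `single i 1` is at most 1 -/
lemma single_apply_le' (i x : ℕ) : (Finsupp.single i (1:ℕ)) x ≤ 1 := by
  rcases eq_or_ne i x with rfl | h
  · simp
  · simp [Finsupp.single_eq_of_ne' h]

lemma apply_ne_zero {i x : ℕ} {c : ℕ} (h : (Finsupp.single i c) x ≠ 0) : x = i := by
  by_contra hx
  exact h (Finsupp.single_eq_of_ne' (fun he => hx he.symm))

/-- Basic properties of the members of `rl n`: squarefree, supported on `[1,n]`,
and covering all edges of the path. -/
lemma rl_prop : ∀ n, ∀ e ∈ rl n,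
    (∀ x, e x ≤ 1) ∧ (∀ x, e x ≠ 0 → 1 ≤ x ∧ x ≤ n) ∧
      (∀ j, 1 ≤ j → j + 1 ≤ n → 1 ≤ e j ∨ 1 ≤ e (j + 1))
  | 0 => by
      intro e he
      simp [rl] at he
      subst he
      exact ⟨by simp, by simp, fun j h1 h2 => by omega⟩
  | 1 => by
      intro e he
      simp [rl] at he
      subst he
      exact ⟨by simp, by simp, fun j h1 h2 => by omega⟩
  | 2 => by
      intro e he
      simp [rl] at he
      rcases he with rfl | rfl
      · refine ⟨fun x => single_apply_le' 1 x, fun x hx => ?_, fun j h1 h2 => ?_⟩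
        · have := apply_ne_zero hx; omega
        · have : j = 1 := by omega
          subst this
          left; simp
      · refine ⟨fun x => single_apply_le' 2 x, fun x hx => ?_, fun j h1 h2 => ?_⟩
        · have := apply_ne_zero hx; omega
        · have : j = 1 := by omega
          subst this
          right; simp
  | 3 => by
      intro e he
      simp [rl] at he
      rcases he with rfl | rfl
      · refine ⟨fun x => single_apply_le' 2 x, fun x hx => ?_, fun j h1 h2 => ?_⟩
        · have := apply_ne_zero hx; omega
        · have : j = 1 ∨ j = 2 := by omega
          rcases this with rfl | rfl
          · right; simp
          · left; simp
      · refine ⟨fun x => ?_, fun x hx => ?_, fun j h1 h2 => ?_⟩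
        · simp only [Finsupp.add_apply]
          have h3 := single_apply_le' 3 x
          rcases eq_or_ne x 1 with rfl | hx1
          · simp [Finsupp.single_apply]
          · rw [Finsupp.single_eq_of_ne' (by omega : (1:ℕ) ≠ x)]
            omega
        · simp only [Finsupp.add_apply] at hx
          have : Finsupp.single 1 1 x ≠ 0 ∨ Finsupp.single 3 1 x ≠ 0 := by omega
          rcases this with h | h
          · have := apply_ne_zero h; omega
          · have := apply_ne_zero h; omega
        · have : j = 1 ∨ j = 2 := by omega
          rcases this with rfl | rfl
          · left; simp
          · right; simp [Finsupp.add_apply]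
  | (n + 4) => by
      intro e he
      simp only [rl, List.mem_append, List.mem_map] at he
      rcases he with ⟨u, hu, rfl⟩ | ⟨u, hu, rfl⟩
      · obtain ⟨hsq, hsupp, hcov⟩ := rl_prop (n + 2) u hu
        have hu3 : u (n + 3) = 0 := by
          by_contra hne
          have := hsupp _ hne
          omega
        refine ⟨fun x => ?_, fun x hx => ?_, fun j h1 h2 => ?_⟩
        · rcases eq_or_ne x (n + 3) with rfl | hxne
          · simp [Finsupp.add_apply, Finsupp.single_apply, hu3]
          · have := hsq x
            simp [Finsupp.add_apply, Finsupp.single_apply, hxne.symm]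
            omega
        · simp only [Finsupp.add_apply, Finsupp.single_apply] at hx
          rcases eq_or_ne x (n + 3) with rfl | hxne
          · omega
          · simp [hxne.symm] at hx
            have := hsupp _ hx
            omega
        · rcases Nat.lt_or_ge (j + 1) (n + 3) with hj | hj
          · rcases hcov j h1 (by omega) with hc | hc
            · left
              simp only [Finsupp.add_apply]
              omega
            · right
              simp only [Finsupp.add_apply]
              omega
          · -- j = n+2 or j = n+3 : the factor single (n+3) 1 covers both
            have : j = n + 2 ∨ j = n + 3 := by omega
            rcases this with rfl | rfl
            · right
              simp [Finsupp.add_apply, Finsupp.single_apply]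
            · left
              simp [Finsupp.add_apply, Finsupp.single_apply]
      · obtain ⟨hsq, hsupp, hcov⟩ := rl_prop (n + 1) u hu
        have hu2 : u (n + 2) = 0 := by
          by_contra hne; have := hsupp _ hne; omega
        have hu4 : u (n + 4) = 0 := by
          by_contra hne; have := hsupp _ hne; omega
        refine ⟨fun x => ?_, fun x hx => ?_, fun j h1 h2 => ?_⟩
        · rcases eq_or_ne x (n + 4) with rfl | hx4
          · simp [Finsupp.add_apply, Finsupp.single_apply, hu4]
          · rcases eq_or_ne x (n + 2) with rfl | hx2
            · simp [Finsupp.add_apply, Finsupp.single_apply, hu2]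
            · have := hsq x
              simp [Finsupp.add_apply, Finsupp.single_apply, hx2.symm, hx4.symm]
              omega
        · simp only [Finsupp.add_apply, Finsupp.single_apply] at hx
          rcases eq_or_ne x (n + 4) with rfl | hx4
          · omega
          · rcases eq_or_ne x (n + 2) with rfl | hx2
            · omega
            · simp [hx2.symm, hx4.symm] at hx
              have := hsupp _ hx
              omega
        · rcases Nat.lt_or_ge (j + 1) (n + 2) with hj | hj
          · rcases hcov j h1 (by omega) with hc | hc
            · left; simp only [Finsupp.add_apply]; omega
            · right; simp only [Finsupp.add_apply]; omega
          · have : j = n + 1 ∨ j = n + 2 ∨ j = n + 3 := by omega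
            rcases this with rfl | rfl | rfl
            · right; simp [Finsupp.add_apply, Finsupp.single_apply]
            · left; simp [Finsupp.add_apply, Finsupp.single_apply]
            · right; simp [Finsupp.add_apply, Finsupp.single_apply]

/-- Every vertex cover of the path dominates a member of `rl n`. -/
lemma rl_cover : ∀ n (d : ℕ →₀ ℕ),
    (∀ j, 1 ≤ j → j + 1 ≤ n → 1 ≤ d j ∨ 1 ≤ d (j + 1)) → ∃ e ∈ rl n, e ≤ d
  | 0, d, _ => ⟨0, by simp [rl]⟩
  | 1, d, _ => ⟨0, by simp [rl]⟩
  | 2, d, hd => by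
      rcases hd 1 le_rfl le_rfl with h | h
      · exact ⟨Finsupp.single 1 1, by simp [rl], Finsupp.single_le_iff.mpr h⟩
      · exact ⟨Finsupp.single 2 1, by simp [rl], Finsupp.single_le_iff.mpr h⟩
  | 3, d, hd => by
      rcases hd 2 (by omega) (by omega) with h | h
      · exact ⟨Finsupp.single 2 1, by simp [rl], Finsupp.single_le_iff.mpr h⟩
      · rcases hd 1 (by omega) (by omega) with h1 | h1
        · refine ⟨Finsupp.single 1 1 + Finsupp.single 3 1, by simp [rl], ?_⟩
          rw [Finsupp.le_def]
          intro x
          rcases eq_or_ne x 1 with rfl | hx1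
          · simpa [Finsupp.add_apply, Finsupp.single_apply] using h1
          · rcases eq_or_ne x 3 with rfl | hx3
            · simpa [Finsupp.add_apply, Finsupp.single_apply] using h
            · simp [Finsupp.add_apply, Finsupp.single_apply, hx1.symm, hx3.symm]
        · exact ⟨Finsupp.single 2 1, by simp [rl], Finsupp.single_le_iff.mpr h1⟩
  | (n + 4), d, hd => by
      rcases Nat.lt_or_ge (d (n + 3)) 1 with h3 | h3
      · -- d (n+3) = 0, so d (n+2) ≥ 1 and d (n+4) ≥ 1
        have h2 : 1 ≤ d (n + 2) := by
          rcases hd (n + 2) (by omega) (by omega) with h | h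
          · exact h
          · rw [show n + 2 + 1 = n + 3 from rfl] at h
            omega
        have h4 : 1 ≤ d (n + 4) := by
          rcases hd (n + 3) (by omega) (by omega) with h | h
          · omega
          · rwa [show n + 3 + 1 = n + 4 from rfl] at h
        obtain ⟨e, he, hle⟩ := rl_cover (n + 1) d (fun j hj1 hj2 => hd j hj1 (by omega))
        obtain ⟨hsq, hsupp, -⟩ := rl_prop (n + 1) e he
        have he2 : e (n + 2) = 0 := by
          by_contra hne; have := hsupp _ hne; omega
        have he4 : e (n + 4) = 0 := by
          by_contra hne; have := hsupp _ hne; omega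
        refine ⟨Finsupp.single (n + 4) 1 + Finsupp.single (n + 2) 1 + e, ?_, ?_⟩
        · simp only [rl, List.mem_append, List.mem_map]
          exact Or.inr ⟨e, he, rfl⟩
        · rw [Finsupp.le_def]
          intro x
          have hlex := Finsupp.le_def.mp hle x
          rcases eq_or_ne x (n + 4) with rfl | hx4
          · simpa [Finsupp.add_apply, Finsupp.single_apply, he4] using h4
          · rcases eq_or_ne x (n + 2) with rfl | hx2
            · simpa [Finsupp.add_apply, Finsupp.single_apply, he2] using h2
            · simpa [Finsupp.add_apply, Finsupp.single_apply, hx2.symm, hx4.symm] using hlex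
      · obtain ⟨e, he, hle⟩ := rl_cover (n + 2) d (fun j hj1 hj2 => hd j hj1 (by omega))
        obtain ⟨hsq, hsupp, -⟩ := rl_prop (n + 2) e he
        have he3 : e (n + 3) = 0 := by
          by_contra hne; have := hsupp _ hne; omega
        refine ⟨Finsupp.single (n + 3) 1 + e, ?_, ?_⟩
        · simp only [rl, List.mem_append, List.mem_map]
          exact Or.inl ⟨e, he, rfl⟩
        · rw [Finsupp.le_def]
          intro x
          have hlex := Finsupp.le_def.mp hle x
          rcases eq_or_ne x (n + 3) with rfl | hx3
          · simpa [Finsupp.add_apply, Finsupp.single_apply, he3] using h3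
          · simpa [Finsupp.add_apply, Finsupp.single_apply, hx3.symm] using hlex


/-- The cover ideal of the path is the monomial span of the rooted list exponents. -/
lemma pathCoverIdeal_eq (k : Type*) [Field k] (n : ℕ) :
    pathCoverIdeal k n = Ideal.span ((fun e => monomial e (1 : k)) '' {e | e ∈ rl n}) := by
  have pair : ∀ j : ℕ, ({(X j : MvPolynomial ℕ k), X (j + 1)} : Set (MvPolynomial ℕ k))
      = (fun e => monomial e (1 : k)) '' {Finsupp.single j 1, Finsupp.single (j + 1) 1} := by
    intro j
    rw [Set.image_insert_eq, Set.image_singleton]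
    rfl
  ext f
  have lhs : f ∈ pathCoverIdeal k n ↔
      ∀ d ∈ f.support, ∀ j, 1 ≤ j → j + 1 ≤ n → 1 ≤ d j ∨ 1 ≤ d (j + 1) := by
    simp only [pathCoverIdeal, Submodule.mem_iInf, pair, mem_ideal_span_monomial_image,
      Finset.mem_Icc, Set.mem_insert_iff, Set.mem_singleton_iff]
    constructor
    · intro H d hd j hj1 hj2
      obtain ⟨si, hsi, hle⟩ := H j ⟨hj1, by omega⟩ d hd
      rcases hsi with rfl | rfl
      · exact Or.inl (Finsupp.single_le_iff.mp hle)
      · exact Or.inr (Finsupp.single_le_iff.mp hle)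
    · intro H j hj d hd
      obtain ⟨hj1, hj2⟩ := hj
      rcases H d hd j hj1 (by omega) with hc | hc
      · exact ⟨_, Or.inl rfl, Finsupp.single_le_iff.mpr hc⟩
      · exact ⟨_, Or.inr rfl, Finsupp.single_le_iff.mpr hc⟩
  rw [lhs, mem_ideal_span_monomial_image]
  constructor
  · intro H d hd
    obtain ⟨e, he, hle⟩ := rl_cover n d (H d hd)
    exact ⟨e, he, hle⟩
  · intro H d hd j hj1 hj2
    obtain ⟨e, he, hle⟩ := H d hd
    rcases (rl_prop n e he).2.2 j hj1 hj2 with hc | hc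
    · exact Or.inl (le_trans hc (Finsupp.le_def.mp hle j))
    · exact Or.inr (le_trans hc (Finsupp.le_def.mp hle (j + 1)))

/-- Exponents of the `s`-fold products of rooted-list monomials. -/
def Sums (n : ℕ) : ℕ → Set (ℕ →₀ ℕ)
  | 0 => {0}
  | (s + 1) => {d | ∃ e ∈ rl n, ∃ b ∈ Sums n s, d = e + b}

lemma add_mem_sums {n s : ℕ} {e d : ℕ →₀ ℕ} (he : e ∈ rl n) (hd : d ∈ Sums n s) :
    e + d ∈ Sums n (s + 1) := ⟨e, he, d, hd, rfl⟩

lemma sum_mem_sums {α : Type*} [DecidableEq α] {n : ℕ} (T : Finset α) (f : α → ℕ →₀ ℕ)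
    (hf : ∀ t ∈ T, f t ∈ rl n) : (∑ t ∈ T, f t) ∈ Sums n T.card := by
  induction T using Finset.induction with
  | empty => simp [Sums]
  | insert _ _ hx ih =>
      rw [Finset.sum_insert hx, Finset.card_insert_of_notMem hx]
      exact add_mem_sums (hf _ (Finset.mem_insert_self _ _))
        (ih fun t ht => hf t (Finset.mem_insert_of_mem ht))

lemma prod_monomial {k : Type*} [Field k] {α : Type*} (T : Finset α) (f : α → ℕ →₀ ℕ) :
    (∏ t ∈ T, monomial (f t) (1 : k)) = monomial (∑ t ∈ T, f t) 1 := by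
  induction T using Finset.cons_induction with
  | empty => simp [monomial_zero', C_1]
  | cons a T hx ih => rw [Finset.prod_cons, Finset.sum_cons, ih, monomial_mul, one_mul]

/-- Powers of the cover ideal as monomial spans. -/
lemma pow_eq (k : Type*) [Field k] (n s : ℕ) :
    (pathCoverIdeal k n) ^ s = Ideal.span ((fun e => monomial e (1 : k)) '' Sums n s) := by
  induction s with
  | zero =>
      rw [pow_zero, Ideal.one_eq_top]
      have : ((fun e => monomial e (1 : k)) '' Sums n 0) = {1} := by
        rw [show Sums n 0 = {0} from rfl, Set.image_singleton]
        simp [monomial_zero', C_1]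
      rw [this, Ideal.span_singleton_one]
  | succ s ih =>
      rw [pow_succ, ih, pathCoverIdeal_eq, Ideal.span_mul_span']
      congr 1
      ext z
      constructor
      · rintro ⟨x, hx, y, hy, rfl⟩
        obtain ⟨b, hb, rfl⟩ := hx
        obtain ⟨e, he, rfl⟩ := hy
        exact ⟨e + b, ⟨e, he, b, hb, rfl⟩, by simp [monomial_mul, add_comm e b]⟩
      · rintro ⟨d, ⟨e, he, b, hb, rfl⟩, rfl⟩
        exact ⟨monomial b 1, ⟨b, hb, rfl⟩, monomial e 1, ⟨e, he, rfl⟩,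
          by simp [monomial_mul, add_comm e b]⟩

lemma mem_pow_iff {k : Type*} [Field k] {n s : ℕ} {c : ℕ →₀ ℕ} :
    monomial c (1 : k) ∈ (pathCoverIdeal k n) ^ s ↔ ∃ d ∈ Sums n s, d ≤ c := by
  classical
  rw [pow_eq, mem_ideal_span_monomial_image, support_monomial, if_neg one_ne_zero]
  simp

end PathAux
end

/-- Let `n ≥ 2`, `s ≥ 2`, and let `R(P_n) = u_1, …, u_r`.  If
`u_{i_1} ⋯ u_{i_s} ∈ G(J(P_n)^s)`, then `u_p u_q ∈ G(J(P_n)^2)` for all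
`p, q ∈ {i_1, …, i_s}`. -/
theorem pairs_of_minimal_sFold_are_minimal (k : Type*) [Field k]
    (n s : ℕ) (hn : 2 ≤ n) (hs : 2 ≤ s)
    (i : Fin s → ℕ) (hi : ∀ t, i t < (rootedList k n).length)
    (h : (∏ t, (rootedList k n).getD (i t) 1) ∈ minGens ((pathCoverIdeal k n) ^ s)) :
    ∀ p q : Fin s,
      (rootedList k n).getD (i p) 1 * (rootedList k n).getD (i q) 1 ∈
        minGens ((pathCoverIdeal k n) ^ 2) := by
  classical
  intro p q
  have hmap := PathAux.rootedList_eq k n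
  have hil : ∀ t, i t < (PathAux.rl n).length := by
    intro t
    have := hi t
    rwa [hmap, List.length_map] at this
  set a : Fin s → (ℕ →₀ ℕ) := fun t => (PathAux.rl n).getD (i t) 0 with ha
  have hget : ∀ t, (rootedList k n).getD (i t) 1 = monomial (a t) (1 : k) := by
    intro t
    rw [hmap, List.getD_eq_getElem _ _ (by rw [List.length_map]; exact hil t),
      List.getElem_map, ha]
    simp only
    rw [List.getD_eq_getElem _ _ (hil t)]
  have hamem : ∀ t, a t ∈ PathAux.rl n := by
    intro t
    rw [ha]
    simp only
    rw [List.getD_eq_getElem _ _ (hil t)]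
    exact List.getElem_mem _
  have hM : (∏ t, (rootedList k n).getD (i t) 1) = monomial (∑ t, a t) (1 : k) := by
    rw [Finset.prod_congr rfl fun t _ => hget t, PathAux.prod_monomial]
  rw [hM] at h
  set D := ∑ t, a t with hD
  have key : ∀ E : ℕ →₀ ℕ, E ∈ PathAux.Sums n s → E ≤ D → E = D := by
    intro E hE hle
    have h1 : monomial E (1 : k) ∈ (pathCoverIdeal k n) ^ s :=
      PathAux.mem_pow_iff.mpr ⟨E, hE, le_rfl⟩
    have h2 : monomial E (1 : k) ∣ monomial D 1 :=
      monomial_dvd_monomial.mpr ⟨Or.inr hle, dvd_rfl⟩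
    have := h.2.2 _ ⟨E, rfl⟩ h1 h2
    exact monomial_left_injective one_ne_zero this
  have hgoal : (rootedList k n).getD (i p) 1 * (rootedList k n).getD (i q) 1
      = monomial (a p + a q) (1 : k) := by
    rw [hget p, hget q, monomial_mul, one_mul]
  rw [hgoal]
  refine ⟨⟨_, rfl⟩, ?_, ?_⟩
  · refine PathAux.mem_pow_iff.mpr ⟨a p + (a q + 0),
      ⟨a p, hamem p, a q + 0, ⟨a q, hamem q, 0, rfl, rfl⟩, rfl⟩, by simp⟩
  · rintro m' ⟨c, rfl⟩ hm hdvd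
    obtain ⟨d, hd, hdc⟩ := PathAux.mem_pow_iff.mp hm
    obtain ⟨e1, he1, b, hb, rfl⟩ := hd
    obtain ⟨e2, he2, z, hz, rfl⟩ := hb
    have hz0 : z = 0 := hz
    subst hz0
    simp only [add_zero] at hdc
    have hc : c ≤ a p + a q := by
      rcases (monomial_dvd_monomial.mp hdvd).1 with h0 | hcle
      · exact absurd h0 one_ne_zero
      · exact hcle
    have h12 : e1 + e2 ≤ a p + a q := le_trans hdc hc
    have heq : e1 + e2 = a p + a q := by
      by_cases hpq : p = q
      · subst hpq
        have hsq1 := (PathAux.rl_prop n e1 he1).1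
        have hsq2 := (PathAux.rl_prop n e2 he2).1
        have hcard : ((Finset.univ : Finset (Fin s)).erase p).card = s - 1 := by
          rw [Finset.card_erase_of_mem (Finset.mem_univ p), Finset.card_univ,
            Fintype.card_fin]
        have hrest : (∑ t ∈ Finset.univ.erase p, a t) ∈ PathAux.Sums n (s - 1) := by
          rw [← hcard]
          exact PathAux.sum_mem_sums _ _ (fun t _ => hamem t)
        have hDd : D = a p + ∑ t ∈ Finset.univ.erase p, a t :=
          (Finset.add_sum_erase _ _ (Finset.mem_univ p)).symm
        have hhalf : ∀ e : ℕ →₀ ℕ, e ∈ PathAux.rl n → e ≤ a p → e = a p := by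
          intro e he hele
          have hmem : e + ∑ t ∈ Finset.univ.erase p, a t ∈ PathAux.Sums n s := by
            have := PathAux.add_mem_sums he hrest
            rwa [show s - 1 + 1 = s by omega] at this
          have hle : e + ∑ t ∈ Finset.univ.erase p, a t ≤ D := by
            rw [hDd]
            exact add_le_add hele le_rfl
          have := key _ hmem hle
          rw [hDd] at this
          exact add_right_cancel this
        have he1le : e1 ≤ a p := by
          rw [Finsupp.le_def]
          intro x
          have hx := Finsupp.le_def.mp h12 x
          simp only [Finsupp.add_apply] at hx
          have := hsq1 x
          have := hsq2 x
          omega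
        have he2le : e2 ≤ a p := by
          rw [Finsupp.le_def]
          intro x
          have hx := Finsupp.le_def.mp h12 x
          simp only [Finsupp.add_apply] at hx
          have := hsq1 x
          have := hsq2 x
          omega
        rw [hhalf e1 he1 he1le, hhalf e2 he2 he2le]
      · have hqmem : q ∈ (Finset.univ : Finset (Fin s)).erase p :=
          Finset.mem_erase.mpr ⟨fun hc => hpq hc.symm, Finset.mem_univ q⟩
        set T := ((Finset.univ : Finset (Fin s)).erase p).erase q with hT
        have hcard : T.card = s - 2 := by
          rw [hT, Finset.card_erase_of_mem hqmem, Finset.card_erase_of_mem (Finset.mem_univ p),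
            Finset.card_univ, Fintype.card_fin]
          omega
        have hrest : (∑ t ∈ T, a t) ∈ PathAux.Sums n (s - 2) := by
          rw [← hcard]
          exact PathAux.sum_mem_sums _ _ (fun t _ => hamem t)
        have hDd : D = a p + (a q + ∑ t ∈ T, a t) := by
          rw [hD, ← Finset.add_sum_erase _ a (Finset.mem_univ p),
            ← Finset.add_sum_erase _ a hqmem]
        have hmem : e1 + (e2 + ∑ t ∈ T, a t) ∈ PathAux.Sums n s := by
          have := PathAux.add_mem_sums he1 (PathAux.add_mem_sums he2 hrest)
          rwa [show s - 2 + 1 + 1 = s by omega] at this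
        have hle : e1 + (e2 + ∑ t ∈ T, a t) ≤ D := by
          rw [hDd, ← add_assoc, ← add_assoc]
          exact add_le_add h12 le_rfl
        have := key _ hmem hle
        rw [hDd, ← add_assoc, ← add_assoc] at this
        exact add_right_cancel this
    have hceq : c = a p + a q := le_antisymm hc (heq ▸ hdc)
    rw [hceq]
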